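/- The free group of rank 2 is not weakly homogeneous: in F₂ := FreeGroup (Fin 2) with free generators x₀, x₁, set a := x₀² * x₁ * x₀⁻¹ * x₁ and b := x₀ * x₁. Then there exist group endomorphisms σ, τ : F₂ →* F₂ with σ a = b and τ b = a (namely σ with σ x₀ = x₀x₁, σ x₁ = 1 and τ with τ x₀ = x₀²x₁, τ x₁ = x₀⁻¹x₁), but there is no group automorphism Φ of F₂ with Φ a = b. -/

import Mathlib

/-- The first free generator of `FreeGroup (Fin 2)`. -/
noncomputable def x₀ : FreeGroup (Fin 2) := FreeGroup.of 0
/-- The second free generator of `FreeGroup (Fin 2)`. -/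
noncomputable def x₁ : FreeGroup (Fin 2) := FreeGroup.of 1

abbrev G3 := Equiv.Perm (Fin 3)

/-- Solutions of `u² v u⁻¹ v = 1` in `S₃`. -/
def solA : Finset (G3 × G3) := Finset.univ.filter (fun p => p.1 ^ 2 * p.2 * p.1⁻¹ * p.2 = 1)
/-- Solutions of `u v = 1` in `S₃`. -/
def solB : Finset (G3 × G3) := Finset.univ.filter (fun p => p.1 * p.2 = 1)

set_option maxRecDepth 100000 in
lemma cardA : solA.card = 12 := by decide
set_option maxRecDepth 100000 in
lemma cardB : solB.card = 6 := by decide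

/-- The free group of rank 2 is not weakly homogeneous: with
`a = x₀² x₁ x₀⁻¹ x₁` and `b = x₀ x₁`, there are endomorphisms `σ`, `τ` of `F₂`
(given on generators by `σ x₀ = x₀x₁`, `σ x₁ = 1`, `τ x₀ = x₀²x₁`, `τ x₁ = x₀⁻¹x₁`)
with `σ a = b` and `τ b = a`, but no automorphism of `F₂` sends `a` to `b`. -/
theorem freeGroup_rank_two_not_weaklyHomogeneous :
    (∃ σ : FreeGroup (Fin 2) →* FreeGroup (Fin 2),
      σ x₀ = x₀ * x₁ ∧ σ x₁ = 1 ∧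
        σ (x₀ ^ 2 * x₁ * x₀⁻¹ * x₁) = x₀ * x₁) ∧
    (∃ τ : FreeGroup (Fin 2) →* FreeGroup (Fin 2),
      τ x₀ = x₀ ^ 2 * x₁ ∧ τ x₁ = x₀⁻¹ * x₁ ∧
        τ (x₀ * x₁) = x₀ ^ 2 * x₁ * x₀⁻¹ * x₁) ∧
    ¬ ∃ Φ : FreeGroup (Fin 2) ≃* FreeGroup (Fin 2),
        Φ (x₀ ^ 2 * x₁ * x₀⁻¹ * x₁) = x₀ * x₁ := by
  refine ⟨?_, ?_, ?_⟩
  · refine ⟨FreeGroup.lift (fun i => if i = 0 then x₀ * x₁ else 1), ?_, ?_, ?_⟩ <;>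
      simp [FreeGroup.lift_apply_of, x₀, x₁, pow_two, mul_assoc]
  · refine ⟨FreeGroup.lift (fun i => if i = 0 then x₀ ^ 2 * x₁ else x₀⁻¹ * x₁), ?_, ?_, ?_⟩ <;>
      simp [FreeGroup.lift_apply_of, x₀, x₁, pow_two, mul_assoc]
  · rintro ⟨Φ, hΦ⟩
    -- map a pair `p ∈ G3 × G3` to the hom sending `x₀ ↦ p.1, x₁ ↦ p.2`
    set lft : G3 × G3 → (FreeGroup (Fin 2) →* G3) :=
      fun p => FreeGroup.lift (fun i => if i = 0 then p.1 else p.2) with hlft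
    have lft0 : ∀ p, lft p x₀ = p.1 := by intro p; simp [hlft, x₀]
    have lft1 : ∀ p, lft p x₁ = p.2 := by intro p; simp [hlft, x₁]
    have key : ∀ f : FreeGroup (Fin 2) →* G3, lft (f x₀, f x₁) = f := by
      intro f
      apply FreeGroup.ext_hom
      intro i
      fin_cases i <;> simp [hlft, x₀, x₁]
    -- bijection between solA and solB
    have e : (solA : Finset (G3 × G3)) ≃ (solB : Finset (G3 × G3)) := by
      refine ⟨fun p => ⟨(((lft p).comp Φ.symm.toMonoidHom) x₀,
                         ((lft p).comp Φ.symm.toMonoidHom) x₁), ?_⟩,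
              fun q => ⟨(((lft q).comp Φ.toMonoidHom) x₀,
                         ((lft q).comp Φ.toMonoidHom) x₁), ?_⟩, ?_, ?_⟩
      · obtain ⟨p, hp⟩ := p
        simp only [solB, Finset.mem_filter, Finset.mem_univ, true_and]
        have : (Φ.symm : FreeGroup (Fin 2) →* FreeGroup (Fin 2)) (x₀ * x₁)
            = x₀ ^ 2 * x₁ * x₀⁻¹ * x₁ := by
          rw [← hΦ]; exact Φ.symm_apply_apply _
        have hp' : p.1 ^ 2 * p.2 * p.1⁻¹ * p.2 = 1 := by
          simpa [solA] using hp
        calc ((lft p).comp Φ.symm.toMonoidHom) x₀ * ((lft p).comp Φ.symm.toMonoidHom) x₁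
            = (lft p) ((Φ.symm : FreeGroup (Fin 2) →* FreeGroup (Fin 2)) (x₀ * x₁)) := by
              simp
          _ = (lft p) (x₀ ^ 2 * x₁ * x₀⁻¹ * x₁) := by rw [this]
          _ = p.1 ^ 2 * p.2 * p.1⁻¹ * p.2 := by simp [lft0, lft1]
          _ = 1 := hp'
      · obtain ⟨q, hq⟩ := q
        simp only [solA, Finset.mem_filter, Finset.mem_univ, true_and]
        have hq' : q.1 * q.2 = 1 := by simpa [solB] using hq
        calc ((lft q).comp Φ.toMonoidHom) x₀ ^ 2 * ((lft q).comp Φ.toMonoidHom) x₁ *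
              (((lft q).comp Φ.toMonoidHom) x₀)⁻¹ * ((lft q).comp Φ.toMonoidHom) x₁
            = (lft q) (Φ (x₀ ^ 2 * x₁ * x₀⁻¹ * x₁)) := by simp
          _ = (lft q) (x₀ * x₁) := by rw [hΦ]
          _ = q.1 * q.2 := by simp [lft0, lft1]
          _ = 1 := hq'
      · rintro ⟨p, hp⟩
        ext : 1
        have h1 : lft (((lft p).comp Φ.symm.toMonoidHom) x₀,
            ((lft p).comp Φ.symm.toMonoidHom) x₁) = (lft p).comp Φ.symm.toMonoidHom :=
          key _
        simp only [h1]
        have : ((lft p).comp Φ.symm.toMonoidHom).comp Φ.toMonoidHom = lft p := by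
          ext z
          simp
        rw [this]
        simp [lft0, lft1]
      · rintro ⟨q, hq⟩
        ext : 1
        have h1 : lft (((lft q).comp Φ.toMonoidHom) x₀,
            ((lft q).comp Φ.toMonoidHom) x₁) = (lft q).comp Φ.toMonoidHom :=
          key _
        simp only [h1]
        have : ((lft q).comp Φ.toMonoidHom).comp Φ.symm.toMonoidHom = lft q := by
          ext z
          simp
        rw [this]
        simp [lft0, lft1]
    have := (Finset.card_bij (fun p _ => (e ⟨p, by assumption⟩ : G3 × G3)) ?_ ?_ ?_ :
        solA.card = solB.card)
    · rw [cardA, cardB] at this; omega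
    · intro p hp; exact (e ⟨p, hp⟩).2
    · intro p hp p' hp' h
      have := e.injective (Subtype.ext h)
      exact congrArg Subtype.val this
    · intro q hq
      exact ⟨(e.symm ⟨q, hq⟩ : G3 × G3), (e.symm ⟨q, hq⟩).2, by
        simp⟩
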